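/- Let k, n ≥ 1 and let ρ be a nonzero linear form in R = 𝔽₂[t₁,…,t_k]. Let F₁, …, F_m be finitely many ρ-cellular families of valences n₁, …, n_m respectively, all consisting of n-element multisets, with pairwise disjoint index sets V₁, …, V_m, such that: (a) whenever n_i = 1, the index set V_i has exactly 2 elements; and (b) whenever i ≠ j, n_i = n_j > 1, p ∈ V_i and q ∈ V_j, the multisets A_p and A_q are NOT congruent mod ρ. Then the combined family (A_p)_{p ∈ V₁ ∪ … ∪ V_m} is ρ-divisible if and only if each family F_i is ρ-divisible. -/

import Mathlib

open MvPolynomial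

noncomputable section

/-- The polynomial ring `R = 𝔽₂[t₁,…,t_k]`. -/
abbrev Rk (k : ℕ) : Type := MvPolynomial (Fin k) (ZMod 2)

/-- The field of fractions `K` of `R`. -/
abbrev Kk (k : ℕ) : Type := FractionRing (Rk k)

/-- The canonical map `R → K`. -/
def toK (k : ℕ) : Rk k →+* Kk k := algebraMap _ _

/-- Two `n`-element multisets (presented as tuples) are congruent mod `ρ` if there
is a multiplicity-preserving bijection matching elements that differ by a
multiple of `ρ`. -/
def CongMod {k n : ℕ} (ρ : Rk k) (A B : Fin n → Rk k) : Prop :=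
  ∃ π : Equiv.Perm (Fin n), ∀ i, ρ ∣ A i - B (π i)

/-- Multiplicity of `ξ` in the tuple `A` (viewed as a multiset). -/
def cnt {k n : ℕ} (ξ : Rk k) (A : Fin n → Rk k) : ℕ :=
  Nat.card {i : Fin n // A i = ξ}

open scoped Classical in
/-- `Ifun S A` is the number of occurrences `I_A(S)` of the multiset `S` as a
submultiset of (the multiset of entries of) `A`, counted with multiplicity:
`∏_ξ C(multiplicity of ξ in A, multiplicity of ξ in S)`. -/
def Ifun {k n : ℕ} (S : Multiset (Rk k)) (A : Fin n → Rk k) : ℕ :=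
  ∏ ξ ∈ S.toFinset, Nat.choose (cnt ξ A) (S.count ξ)

/-- `esig n r x` is the `r`-th elementary symmetric polynomial of the entries of
the tuple `x`. -/
def esig {k : ℕ} (n r : ℕ) (x : Fin n → Rk k) : Rk k :=
  ∑ t ∈ Finset.powersetCard r Finset.univ, ∏ i ∈ t, x i

/-- A `ρ`-cellular family of valence `nρ`: a finite family, indexed by a finite
set `V` of even cardinality, of `n`-element multisets of nonzero linear forms,
each containing `ρ` with multiplicity exactly `nρ`, all congruent mod `ρ`. -/
def Cellular {k n : ℕ} (ρ : Rk k) (nρ : ℕ) {V : Type} [Fintype V]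
    (A : V → Fin n → Rk k) : Prop :=
  Even (Fintype.card V) ∧
  (∀ p i, A p i ≠ 0 ∧ (A p i).IsHomogeneous 1) ∧
  (∀ p, cnt ρ (A p) = nρ) ∧
  (∀ p q, CongMod ρ (A p) (A q))

/-- Property (P): for every multiset `S` of nonzero linear forms of cardinality
at most `nρ - 1` (including `S = ∅`), `∑_{p ∈ V} I_p(S)` is even. -/
def PropP {k n : ℕ} (nρ : ℕ) {V : Type} [Fintype V]
    (A : V → Fin n → Rk k) : Prop :=
  ∀ S : Multiset (Rk k), (∀ ξ ∈ S, ξ ≠ 0 ∧ ξ.IsHomogeneous 1) → S.card ≤ nρ - 1 →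
    Even (∑ p : V, Ifun S (A p))

/-- A finite family `(A_p)_{p ∈ V}` of `n`-element multisets is `ρ`-divisible if
for every symmetric polynomial `f` over `𝔽₂` in `n` variables there are
`h, g ∈ R` with `ρ ∤ g` such that `∑_{p ∈ V} f(A_p)/σₙ(A_p) = h/g` in `K`. -/
def RhoDivisible {k n : ℕ} (ρ : Rk k) {V : Type} [Fintype V]
    (A : V → Fin n → Rk k) : Prop :=
  ∀ f : MvPolynomial (Fin n) (ZMod 2), f.IsSymmetric →
    ∃ h g : Rk k, ¬ ρ ∣ g ∧
      ∑ p : V, toK k (aeval (A p) f) / toK k (∏ i, A p i) = toK k h / toK k g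

/-! ### Auxiliary machinery -/

instance charP_Rk (k : ℕ) : CharP (Rk k) 2 :=
  charP_of_injective_ringHom (C_injective (Fin k) (ZMod 2)) 2

instance charP_Kk (k : ℕ) : CharP (Kk k) 2 :=
  charP_of_injective_ringHom (IsFractionRing.injective (Rk k) (Kk k))
    (f := algebraMap (Rk k) (Kk k)) 2

lemma zmod2_eq_one {a : ZMod 2} (h : a ≠ 0) : a = 1 := by
  fin_cases a <;> [exact absurd rfl h; rfl]

lemma finsupp_degree_one {k : ℕ} {d : Fin k →₀ ℕ} (hd : Finsupp.degree d = 1) :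
    ∃ i, d = Finsupp.single i 1 := by
  classical
  have hne : d.support.Nonempty := by
    rcases Finset.eq_empty_or_nonempty d.support with h | h
    · exfalso
      have : d = 0 := by rwa [← Finsupp.support_eq_empty]
      rw [this] at hd; simp [Finsupp.degree] at hd
    · exact h
  obtain ⟨i, hi⟩ := hne
  refine ⟨i, ?_⟩
  have hdi : 1 ≤ d i := Nat.one_le_iff_ne_zero.mpr (Finsupp.mem_support_iff.mp hi)
  have hsub : d.support ⊆ {i} := by
    intro j hj
    by_contra hji
    have hji' : j ≠ i := by simpa using hji
    have hpair : ({i, j} : Finset (Fin k)) ⊆ d.support := by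
      intro x hx
      simp only [Finset.mem_insert, Finset.mem_singleton] at hx
      rcases hx with rfl | rfl
      · exact hi
      · exact hj
    have h2 : d i + d j ≤ Finsupp.degree d := by
      have := Finset.sum_le_sum_of_subset hpair (f := fun x => d x)
      rwa [Finset.sum_pair (by exact fun h => hji' h.symm)] at this
    have hdj : 1 ≤ d j := Nat.one_le_iff_ne_zero.mpr (Finsupp.mem_support_iff.mp hj)
    omega
  have hdi1 : d i = 1 := by
    have : Finsupp.degree d = d i := by
      rw [Finsupp.degree]
      have : d.support = {i} := by
        apply Finset.Subset.antisymm hsub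
        intro x hx; simp only [Finset.mem_singleton] at hx; subst hx; exact hi
      show ∑ x ∈ d.support, d x = d i; rw [this, Finset.sum_singleton]
    omega
  rw [← hdi1]; exact Finsupp.support_subset_singleton.mp hsub

lemma homog_one_rep {k : ℕ} {p : Rk k} (hp : p.IsHomogeneous 1) :
    p = ∑ i, (C (coeff (Finsupp.single i 1) p) * X i : Rk k) := by
  classical
  ext d
  rw [coeff_sum]
  simp only [coeff_C_mul, coeff_X']
  by_cases hd : Finsupp.degree d = 1
  · obtain ⟨i0, rfl⟩ := finsupp_degree_one hd
    rw [Finset.sum_eq_single i0]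
    · simp
    · intro j _ hji
      have : ¬ (Finsupp.single j 1 = Finsupp.single i0 1) := by
        intro h
        exact hji (by simpa using (Finsupp.single_left_inj (one_ne_zero)).mp h)
      simp [this]
    · intro h; exact absurd (Finset.mem_univ i0) h
  · have hl : coeff d p = 0 := by
      by_contra h
      exact hd (by rw [Finsupp.degree_eq_weight_one]; exact hp h)
    rw [hl]
    symm
    apply Finset.sum_eq_zero
    intro j _
    have : ¬ (Finsupp.single j 1 = d) := by
      intro h
      apply hd
      rw [← h]
      simp [Finsupp.degree_single, Finsupp.support_single_ne_zero _ (one_ne_zero)]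
    simp [this]

lemma prime_of_homog_one {k : ℕ} (hk : 1 ≤ k) {ρ : Rk k} (hρ0 : ρ ≠ 0)
    (hρ1 : ρ.IsHomogeneous 1) : Prime ρ := by
  classical
  have hex : ∃ j, coeff (Finsupp.single j 1) ρ ≠ 0 := by
    by_contra h
    push_neg at h
    apply hρ0
    rw [homog_one_rep hρ1]
    apply Finset.sum_eq_zero
    intro j _
    rw [h j, map_zero, zero_mul]
  obtain ⟨j, hj⟩ := hex
  have hj1 : coeff (Finsupp.single j 1) ρ = 1 := zmod2_eq_one hj
  set g : Fin k → Rk k := fun i => if i = j then ρ else X i with hg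
  have hsj : coeff (Finsupp.single j 1) (ρ - X j) = 0 := by
    rw [coeff_sub, hj1, coeff_X]; simp
  have hs1 : (ρ - X j).IsHomogeneous 1 := hρ1.sub (isHomogeneous_X _ _)
  have haev_s : aeval g (ρ - X j) = ρ - X j := by
    conv_lhs => rw [homog_one_rep hs1]
    rw [map_sum]
    conv_rhs => rw [homog_one_rep hs1]
    apply Finset.sum_congr rfl
    intro i _
    rcases eq_or_ne i j with rfl | hij
    · rw [hsj]; simp
    · simp [hg, hij]
  have hinv : (aeval g : Rk k →ₐ[ZMod 2] Rk k).comp (aeval g) = AlgHom.id _ _ := by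
    apply MvPolynomial.algHom_ext
    intro i
    rcases eq_or_ne i j with rfl | hij
    · simp only [AlgHom.coe_comp, Function.comp_apply, AlgHom.id_apply]
      rw [aeval_X]
      have h1 : g i = ρ := if_pos rfl
      rw [h1]
      have h2 : aeval g ρ = aeval g ((ρ - X i) + X i) := by congr 1; ring
      rw [h2, map_add, haev_s, aeval_X, h1]
      have hc1 : ρ + ρ = (0 : Rk k) := CharTwo.add_self_eq_zero ρ
      have hc2 : (X i : Rk k) + X i = 0 := CharTwo.add_self_eq_zero _
      linear_combination hc1 - hc2
    · simp [hg, hij]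
  set e : Rk k ≃ₐ[ZMod 2] Rk k := AlgEquiv.ofAlgHom (aeval g) (aeval g) hinv hinv with he
  have heX : e (X j) = ρ := by
    simp only [he, AlgEquiv.ofAlgHom, AlgEquiv.coe_mk]
    simp [hg]
  have hXp : Prime (X j : Rk k) := by
    obtain ⟨k0, rfl⟩ : ∃ k0, k = k0 + 1 := ⟨k - 1, by omega⟩
    set e2 := (renameEquiv (ZMod 2) (Equiv.swap j 0)).trans (finSuccEquiv (ZMod 2) k0) with he2
    rw [← MulEquiv.prime_iff e2.toMulEquiv]
    have : e2 (X j) = Polynomial.X := by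
      simp [he2, finSuccEquiv_X_zero]
    rw [show e2.toMulEquiv (X j) = Polynomial.X from this]
    exact Polynomial.prime_X
  have h := (MulEquiv.prime_iff e.toMulEquiv (p := X j)).mpr hXp
  rwa [show e.toMulEquiv (X j) = ρ from heX] at h

lemma linear_dvd_linear {k : ℕ} {ρ lam : Rk k} (hρ1 : ρ.IsHomogeneous 1)
    (hl0 : lam ≠ 0) (hl1 : lam.IsHomogeneous 1) (hdvd : ρ ∣ lam) : lam = ρ := by
  classical
  obtain ⟨c, hc⟩ := hdvd
  have hkey : ∀ d, 1 ≤ d → homogeneousComponent d c = 0 := by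
    intro d hd
    by_cases hdc : c.totalDegree < d
    · exact homogeneousComponent_eq_zero _ _ hdc
    push_neg at hdc
    have hsum : lam = ∑ i ∈ Finset.range (c.totalDegree + 1), ρ * homogeneousComponent i c := by
      rw [← Finset.mul_sum, sum_homogeneousComponent, ← hc]
    have h2 : homogeneousComponent (d+1) lam =
        ∑ i ∈ Finset.range (c.totalDegree + 1),
          homogeneousComponent (d+1) (ρ * homogeneousComponent i c) := by
      rw [hsum, map_sum]
    have h3 : ∀ i, homogeneousComponent (d+1) (ρ * homogeneousComponent i c)
        = if d + 1 = 1 + i then ρ * homogeneousComponent i c else 0 := by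
      intro i
      exact homogeneousComponent_of_mem
        ((hρ1.mul (homogeneousComponent_isHomogeneous i c)))
    have h4 : homogeneousComponent (d+1) lam = ρ * homogeneousComponent d c := by
      rw [h2, Finset.sum_congr rfl (fun i _ => h3 i), Finset.sum_eq_single d]
      · rw [if_pos (by omega)]
      · intro i _ hi
        rw [if_neg (by omega)]
      · intro hmem
        exact absurd (Finset.mem_range.mpr (by omega)) hmem
    have h5 : homogeneousComponent (d+1) lam = 0 := by
      have := homogeneousComponent_of_mem (m := d+1) (mem_homogeneousSubmodule 1 lam |>.mpr hl1)
      rw [this, if_neg (by omega)]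
    rcases mul_eq_zero.mp (h5 ▸ h4.symm) with h | h
    · exact absurd h (fun hh => hl0 (by rw [hc, hh, zero_mul]))
    · exact h
  have hc0 : c = C (coeff 0 c) := by
    conv_lhs => rw [← sum_homogeneousComponent c]
    rw [Finset.sum_eq_single 0]
    · exact homogeneousComponent_zero c
    · intro i _ hi
      exact hkey i (Nat.one_le_iff_ne_zero.mpr hi)
    · intro h; exact absurd (Finset.mem_range.mpr (Nat.succ_pos _)) h
  have ha : coeff 0 c ≠ 0 := by
    intro h
    rw [h, map_zero] at hc0
    rw [hc, hc0, mul_zero] at hl0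
    exact hl0 rfl
  rw [hc, hc0, zmod2_eq_one ha, map_one, mul_one]

section QUOT
variable {k n : ℕ} {ρ : Rk k}

/-- the quotient map into `R/(ρ)` -/
abbrev mq (ρ : Rk k) : Rk k →+* (Rk k ⧸ Ideal.span {ρ}) := Ideal.Quotient.mk _

lemma dvd_iff_mq {x : Rk k} : ρ ∣ x ↔ mq ρ x = 0 := by
  rw [Ideal.Quotient.eq_zero_iff_mem, Ideal.mem_span_singleton]

lemma mq_eq_iff {x y : Rk k} : mq ρ x = mq ρ y ↔ ρ ∣ x - y := by
  rw [Ideal.Quotient.mk_eq_mk_iff_sub_mem, Ideal.mem_span_singleton]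

lemma mq_aeval (a : Fin n → Rk k) (f : MvPolynomial (Fin n) (ZMod 2)) :
    mq ρ (aeval a f) = aeval (fun i => mq ρ (a i)) f := by
  have := MvPolynomial.comp_aeval (φ := Ideal.Quotient.mkₐ (ZMod 2) (Ideal.span {ρ})) (f := a)
  have h2 := congrArg (fun φ => φ f) this
  simpa using h2

lemma congMod_aeval {a b : Fin n → Rk k} {f : MvPolynomial (Fin n) (ZMod 2)}
    (hf : f.IsSymmetric) (hcong : CongMod ρ a b) :
    ρ ∣ aeval a f - aeval b f := by
  obtain ⟨π, hπ⟩ := hcong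
  rw [← mq_eq_iff, mq_aeval, mq_aeval]
  have hab : (fun i => mq ρ (a i)) = (fun i => mq ρ (b i)) ∘ π := by
    funext i
    exact mq_eq_iff.mpr (hπ i)
  rw [hab, ← aeval_rename, hf π]

lemma cnt_eq_filter_card (ξ : Rk k) (a : Fin n → Rk k) [DecidablePred (fun i => a i = ξ)] :
    cnt ξ a = (Finset.univ.filter (fun i => a i = ξ)).card := by
  rw [cnt, Nat.card_eq_fintype_card, Fintype.card_subtype]

lemma cnt_le (ξ : Rk k) (a : Fin n → Rk k) : cnt ξ a ≤ n := by
  rw [cnt, Nat.card_eq_fintype_card]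
  calc Fintype.card {i : Fin n // a i = ξ} ≤ Fintype.card (Fin n) := Fintype.card_subtype_le _
  _ = n := Fintype.card_fin n

variable (hρ0 : ρ ≠ 0) (hρ1 : ρ.IsHomogeneous 1) (hρp : Prime ρ)
include hρ1

lemma entry_dvd_iff {lam : Rk k} (h0 : lam ≠ 0) (h1 : lam.IsHomogeneous 1) :
    ρ ∣ lam ↔ lam = ρ :=
  ⟨fun h => linear_dvd_linear hρ1 h0 h1 h, fun h => h ▸ dvd_refl ρ⟩

include hρp in
lemma sigma_split {a : Fin n → Rk k} (he : ∀ i, a i ≠ 0 ∧ (a i).IsHomogeneous 1) :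
    ∃ u, ¬ ρ ∣ u ∧ ∏ i, a i = ρ ^ cnt ρ a * u ∧
      u = ∏ i ∈ Finset.univ.filter (fun i => ¬ (a i = ρ)), a i := by
  classical
  refine ⟨_, ?_, ?_, rfl⟩
  · intro h
    obtain ⟨i, hi, hdvd⟩ := hρp.exists_mem_finset_dvd h
    rw [Finset.mem_filter] at hi
    exact hi.2 (linear_dvd_linear hρ1 (he i).1 (he i).2 hdvd)
  · rw [← Finset.prod_filter_mul_prod_filter_not Finset.univ (fun i => a i = ρ) a]
    congr 1
    rw [Finset.prod_congr rfl (fun i hi => (Finset.mem_filter.mp hi).2),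
      Finset.prod_const, cnt_eq_filter_card]

lemma congMod_entry_iff {a b : Fin n → Rk k} (hea : ∀ i, a i ≠ 0 ∧ (a i).IsHomogeneous 1)
    (heb : ∀ i, b i ≠ 0 ∧ (b i).IsHomogeneous 1) {π : Equiv.Perm (Fin n)}
    (hπ : ∀ i, ρ ∣ a i - b (π i)) (i : Fin n) :
    a i = ρ ↔ b (π i) = ρ := by
  constructor
  · intro h
    apply linear_dvd_linear hρ1 (heb _).1 (heb _).2
    have h2 := hπ i
    rw [h] at h2
    have := dvd_sub (dvd_refl ρ) h2
    simpa using this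
  · intro h
    apply linear_dvd_linear hρ1 (hea _).1 (hea _).2
    have h2 := hπ i
    rw [h] at h2
    have := dvd_add h2 (dvd_refl ρ)
    simpa using this

lemma cnt_congMod {a b : Fin n → Rk k} (hea : ∀ i, a i ≠ 0 ∧ (a i).IsHomogeneous 1)
    (heb : ∀ i, b i ≠ 0 ∧ (b i).IsHomogeneous 1) (h : CongMod ρ a b) :
    cnt ρ a = cnt ρ b := by
  obtain ⟨π, hπ⟩ := h
  exact Nat.card_congr (Equiv.subtypeEquiv π (fun i =>
    congMod_entry_iff hρ1 hea heb hπ i))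

lemma u_congMod {a b : Fin n → Rk k} (hea : ∀ i, a i ≠ 0 ∧ (a i).IsHomogeneous 1)
    (heb : ∀ i, b i ≠ 0 ∧ (b i).IsHomogeneous 1) (h : CongMod ρ a b)
    [DecidablePred (fun i => ¬ (a i = ρ))] [DecidablePred (fun i => ¬ (b i = ρ))] :
    ρ ∣ (∏ i ∈ Finset.univ.filter (fun i => ¬ (a i = ρ)), a i) -
        (∏ i ∈ Finset.univ.filter (fun i => ¬ (b i = ρ)), b i) := by
  obtain ⟨π, hπ⟩ := h
  rw [← mq_eq_iff, map_prod, map_prod]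
  rw [Finset.prod_nbij' (fun i => π i) (fun i => π.symm i)]
  · intro i hi
    rw [Finset.mem_filter] at hi ⊢
    exact ⟨Finset.mem_univ _, fun hh => hi.2 ((congMod_entry_iff hρ1 hea heb hπ i).mpr hh)⟩
  · intro i hi
    rw [Finset.mem_filter] at hi ⊢
    refine ⟨Finset.mem_univ _, fun hh => hi.2 ?_⟩
    have := (congMod_entry_iff hρ1 hea heb hπ (π.symm i)).mp hh
    simpa using this
  · intro i _; simp
  · intro i _; simp
  · intro i _
    exact (mq_eq_iff.mpr (hπ i))

end QUOT

/-- key separation: congruence of all elementary symmetric values mod `ρ` implies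
congruence of the multisets. -/
lemma congMod_of_esymm {k n : ℕ} {ρ : Rk k} (hρ0 : ρ ≠ 0) (hρp : Prime ρ)
    {a b : Fin n → Rk k}
    (h : ∀ r, ρ ∣ (∑ t ∈ Finset.powersetCard r Finset.univ, ∏ i ∈ t, a i)
      - (∑ t ∈ Finset.powersetCard r Finset.univ, ∏ i ∈ t, b i)) :
    CongMod ρ a b := by
  classical
  letI : Ideal.IsPrime (Ideal.span {ρ} : Ideal (Rk k)) :=
    (Ideal.span_singleton_prime hρ0).mpr hρp
  set D := Rk k ⧸ Ideal.span {ρ}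
  set abar : Fin n → D := fun i => mq ρ (a i) with habar
  set bbar : Fin n → D := fun i => mq ρ (b i) with hbbar
  set sa : Multiset D := Finset.univ.val.map abar with hsa
  set sb : Multiset D := Finset.univ.val.map bbar with hsb
  have hesymm : ∀ r, sa.esymm r = sb.esymm r := by
    intro r
    rw [hsa, hsb, Finset.esymm_map_val, Finset.esymm_map_val]
    have := mq_eq_iff.mpr (h r)
    rw [map_sum, map_sum] at this
    simpa [map_prod] using this
  have hneg : ∀ x : D, -x = x := by
    intro x
    obtain ⟨y, rfl⟩ := Ideal.Quotient.mk_surjective x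
    rw [neg_eq_iff_add_eq_zero, ← map_add, CharTwo.add_self_eq_zero, map_zero]
  have hcard : Multiset.card sa = Multiset.card sb := by
    simp [hsa, hsb]
  have hprod : (sa.map fun r => Polynomial.X - Polynomial.C r).prod =
      (sb.map fun r => Polynomial.X - Polynomial.C r).prod := by
    have h1 : ∀ s : Multiset D, (s.map fun r => Polynomial.X - Polynomial.C r)
        = s.map fun r => Polynomial.X + Polynomial.C r := by
      intro s
      apply Multiset.map_congr rfl
      intro x _
      rw [sub_eq_add_neg, ← Polynomial.C_neg, hneg]
    rw [h1, h1, Multiset.prod_X_add_C_eq_sum_esymm, Multiset.prod_X_add_C_eq_sum_esymm, hcard]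
    apply Finset.sum_congr rfl
    intro j _
    rw [hesymm j]
  have hsab : sa = sb := by
    have := congrArg Polynomial.roots hprod
    rwa [Polynomial.roots_multiset_prod_X_sub_C, Polynomial.roots_multiset_prod_X_sub_C] at this
  have hcount : ∀ ξ : D, Fintype.card {i // abar i = ξ} = Fintype.card {j // bbar j = ξ} := by
    intro ξ
    have hca : ∀ (f : Fin n → D), Fintype.card {i // f i = ξ}
        = Multiset.count ξ (Finset.univ.val.map f) := by
      intro f
      rw [Multiset.count_map, Fintype.card_subtype]
      have heq : (Finset.filter (fun i => f i = ξ) Finset.univ)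
          = Finset.filter (fun i => ξ = f i) Finset.univ := by
        ext i; simp [eq_comm]
      rw [heq, Finset.card_def, Finset.filter_val]
    rw [hca, hca, ← hsa, ← hsb, hsab]
  have e : ∀ ξ : D, {i // abar i = ξ} ≃ {j // bbar j = ξ} :=
    fun ξ => Fintype.equivOfCardEq (hcount ξ)
  refine ⟨Equiv.ofFiberEquiv e, fun i => ?_⟩
  rw [← mq_eq_iff]
  exact (Equiv.ofFiberEquiv_map e i).symm

section GOOD
variable {k n : ℕ} {ρ : Rk k}

/-- `x` has a representation `h / g` with `ρ ∤ g`. -/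
def Gd (ρ : Rk k) (x : Kk k) : Prop :=
  ∃ h g : Rk k, ¬ ρ ∣ g ∧ x = toK k h / toK k g

lemma toK_ne_zero {g : Rk k} (hg : g ≠ 0) : toK k g ≠ 0 := by
  intro h
  apply hg
  have : toK k g = toK k 0 := by simpa using h
  exact IsFractionRing.injective (Rk k) (Kk k) this

lemma ne_zero_of_not_dvd {g : Rk k} (hg : ¬ ρ ∣ g) : g ≠ 0 := by
  rintro rfl; exact hg (dvd_zero ρ)

lemma Gd_frac {h g : Rk k} (hg : ¬ ρ ∣ g) : Gd ρ (toK k h / toK k g) := ⟨h, g, hg, rfl⟩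

variable (hρp : Prime ρ)
include hρp

lemma not_dvd_mul {a b : Rk k} (ha : ¬ ρ ∣ a) (hb : ¬ ρ ∣ b) : ¬ ρ ∣ a * b := by
  intro h
  rcases hρp.dvd_mul.mp h with h | h
  · exact ha h
  · exact hb h

lemma not_dvd_pow {a : Rk k} (ha : ¬ ρ ∣ a) (e : ℕ) : ¬ ρ ∣ a ^ e := by
  intro h
  exact ha (hρp.dvd_of_dvd_pow h)

lemma Gd_toK (h : Rk k) : Gd ρ (toK k h) :=
  ⟨h, 1, hρp.not_dvd_one, by rw [(toK k).map_one, div_one]⟩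

lemma Gd_zero : Gd ρ (0 : Kk k) := by
  simpa using Gd_toK hρp (0 : Rk k)

lemma Gd_add {x y : Kk k} (hx : Gd ρ x) (hy : Gd ρ y) : Gd ρ (x + y) := by
  obtain ⟨h1, g1, hg1, rfl⟩ := hx
  obtain ⟨h2, g2, hg2, rfl⟩ := hy
  refine ⟨h1 * g2 + g1 * h2, g1 * g2, not_dvd_mul hρp hg1 hg2, ?_⟩
  rw [div_add_div _ _ (toK_ne_zero (ne_zero_of_not_dvd hg1))
    (toK_ne_zero (ne_zero_of_not_dvd hg2)), (toK k).map_add, (toK k).map_mul,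
    (toK k).map_mul, (toK k).map_mul]

lemma Gd_mul {x y : Kk k} (hx : Gd ρ x) (hy : Gd ρ y) : Gd ρ (x * y) := by
  obtain ⟨h1, g1, hg1, rfl⟩ := hx
  obtain ⟨h2, g2, hg2, rfl⟩ := hy
  refine ⟨h1 * h2, g1 * g2, not_dvd_mul hρp hg1 hg2, ?_⟩
  rw [div_mul_div_comm, (toK k).map_mul, (toK k).map_mul]

lemma Gd_sum {ι : Type*} (s : Finset ι) (F : ι → Kk k) (h : ∀ i ∈ s, Gd ρ (F i)) :
    Gd ρ (∑ i ∈ s, F i) := by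
  classical
  induction s using Finset.induction_on with
  | empty => simpa using Gd_zero hρp
  | @insert _ _ hx ih =>
    rw [Finset.sum_insert hx]
    exact Gd_add hρp (h _ (Finset.mem_insert_self _ _))
      (ih (fun i hi => h i (Finset.mem_insert_of_mem hi)))

lemma Gd_cancel {c : Rk k} (hc : ¬ ρ ∣ c) {x : Kk k} (h : Gd ρ (toK k c * x)) :
    Gd ρ x := by
  obtain ⟨h1, g1, hg1, heq⟩ := h
  refine ⟨h1, g1 * c, not_dvd_mul hρp hg1 hc, ?_⟩
  have hc0 : toK k c ≠ 0 := toK_ne_zero (ne_zero_of_not_dvd hc)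
  rw [(toK k).map_mul, div_mul_eq_div_div, ← heq]
  field_simp

end GOOD

lemma two_term_div {K : Type*} [Field K] {r u v a b c : K} (hr : r ≠ 0) (hu : u ≠ 0)
    (hv : v ≠ 0) (h : r * c = a * v + b * u) :
    a / (r * u) + b / (r * v) = c / (u * v) := by
  rw [div_add_div _ _ (mul_ne_zero hr hu) (mul_ne_zero hr hv)]
  rw [div_eq_div_iff (by exact mul_ne_zero (mul_ne_zero hr hu) (mul_ne_zero hr hv))
    (mul_ne_zero hu hv)]
  ring_nf
  linear_combination (-(r * u * v)) * h

/-- the sum attached to one family -/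
def Ssum {k n : ℕ} {V : Type} [Fintype V] (A : V → Fin n → Rk k)
    (f : MvPolynomial (Fin n) (ZMod 2)) : Kk k :=
  ∑ p, toK k (aeval (A p) f) / toK k (∏ i, A p i)

section FAMILY
variable {k n : ℕ} {ρ : Rk k} {V : Type} [Fintype V] {A : V → Fin n → Rk k}
variable (hρ0 : ρ ≠ 0) (hρ1 : ρ.IsHomogeneous 1) (hρp : Prime ρ)
include hρ1 hρp

/-- a family of valence 0 is divisible -/
lemma good_val0 {nν : ℕ} (hc : Cellular ρ nν A) (hν : nν = 0)
    (f : MvPolynomial (Fin n) (ZMod 2)) : Gd ρ (Ssum A f) := by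
  apply Gd_sum hρp
  intro p _
  obtain ⟨u, hu, hprod, -⟩ := sigma_split hρ1 hρp (hc.2.1 p)
  rw [hprod, hc.2.2.1 p, hν, pow_zero, one_mul]
  exact Gd_frac hu

include hρ0 in
/-- a family of valence 1 with exactly two members is divisible -/
lemma good_val1 (hc : Cellular ρ 1 A) (hcard : Fintype.card V = 2)
    {f : MvPolynomial (Fin n) (ZMod 2)} (hf : f.IsSymmetric) : Gd ρ (Ssum A f) := by
  classical
  have hcard' : (Finset.univ : Finset V).card = 2 := hcard
  obtain ⟨x, y, hxy, hU⟩ := Finset.card_eq_two.mp hcard'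
  have hSsum : Ssum A f = toK k (aeval (A x) f) / toK k (∏ i, A x i)
      + toK k (aeval (A y) f) / toK k (∏ i, A y i) := by
    rw [Ssum, hU]
    exact Finset.sum_pair hxy
  obtain ⟨u, hu, hprodx, hux⟩ := sigma_split hρ1 hρp (hc.2.1 x)
  obtain ⟨v, hv, hprody, hvy⟩ := sigma_split hρ1 hρp (hc.2.1 y)
  rw [hc.2.2.1 x, pow_one] at hprodx
  rw [hc.2.2.1 y, pow_one] at hprody
  -- numerator congruence
  have hfc : ρ ∣ aeval (A x) f - aeval (A y) f := congMod_aeval hf (hc.2.2.2 x y)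
  have huv : ρ ∣ u - v := by
    rw [hux, hvy]
    exact u_congMod hρ1 (hc.2.1 x) (hc.2.1 y) (hc.2.2.2 x y)
  obtain ⟨e1, he1⟩ := hfc
  obtain ⟨e2, he2⟩ := huv
  have hnum : aeval (A x) f * v + aeval (A y) f * u
      = ρ * (e1 * v + aeval (A y) f * e2) := by
    have hself : aeval (A y) f * v + aeval (A y) f * v = 0 :=
      CharTwo.add_self_eq_zero _
    linear_combination v * he1 + aeval (A y) f * he2 + hself
  rw [hSsum, hprodx, hprody, (toK k).map_mul, (toK k).map_mul]
  have heq : toK k ρ * toK k (e1 * v + aeval (A y) f * e2)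
      = toK k (aeval (A x) f) * toK k v + toK k (aeval (A y) f) * toK k u := by
    rw [← (toK k).map_mul, ← hnum, (toK k).map_add, (toK k).map_mul, (toK k).map_mul]
  have := two_term_div (toK_ne_zero hρ0) (toK_ne_zero (ne_zero_of_not_dvd hu))
    (toK_ne_zero (ne_zero_of_not_dvd hv)) heq
  rw [this, ← (toK k).map_mul]
  exact Gd_frac (not_dvd_mul hρp hu hv)

/-- the Frobenius twist relation for one family -/
lemma family_twist {nν : ℕ} (hc : Cellular ρ nν A) (q : V)
    (f G : MvPolynomial (Fin n) (ZMod 2)) (hG : G.IsSymmetric) (L : ℕ) (hL : n ≤ 2 ^ L) :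
    Gd ρ (Ssum A (G ^ (2 ^ L) * f) + toK k (aeval (A q) G) ^ (2 ^ L) * Ssum A f) := by
  classical
  haveI : Fact (Nat.Prime 2) := ⟨Nat.prime_two⟩
  rw [Ssum, Ssum, Finset.mul_sum, ← Finset.sum_add_distrib]
  apply Gd_sum hρp
  intro p _
  obtain ⟨u, hu, hprod, -⟩ := sigma_split hρ1 hρp (hc.2.1 p)
  rw [hc.2.2.1 p] at hprod
  have hcong : ρ ∣ aeval (A p) G - aeval (A q) G := congMod_aeval hG (hc.2.2.2 p q)
  rw [CharTwo.sub_eq_add] at hcong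
  obtain ⟨d, hd⟩ := hcong
  have hν : nν ≤ 2 ^ L := le_trans (by rw [← hc.2.2.1 p]; exact cnt_le ρ (A p)) hL
  set E := 2 ^ L with hE
  -- numerator identity in R
  have hnum : aeval (A p) (G ^ E * f) + (aeval (A q) G) ^ E * aeval (A p) f
      = ρ ^ nν * (ρ ^ (E - nν) * d ^ E * aeval (A p) f) := by
    rw [map_mul, map_pow]
    have hfrob : (aeval (A p) G) ^ E + (aeval (A q) G) ^ E
        = (aeval (A p) G + aeval (A q) G) ^ E := by
      rw [hE, add_pow_char_pow]
    have hpow : ρ ^ E = ρ ^ nν * ρ ^ (E - nν) := by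
      rw [← pow_add]; congr 1; omega
    calc (aeval (A p) G) ^ E * aeval (A p) f + (aeval (A q) G) ^ E * aeval (A p) f
        = ((aeval (A p) G) ^ E + (aeval (A q) G) ^ E) * aeval (A p) f := by ring
      _ = (ρ * d) ^ E * aeval (A p) f := by rw [hfrob, hd]
      _ = ρ ^ nν * (ρ ^ (E - nν) * d ^ E * aeval (A p) f) := by rw [mul_pow, hpow]; ring
  have hρn0 : toK k (ρ ^ nν) ≠ 0 :=
    toK_ne_zero (pow_ne_zero _ (fun hdd => hρp.ne_zero hdd))
  have hcancel : ∀ a b c : Rk k, toK k a ≠ 0 →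
      toK k (a * b) / toK k (a * c) = toK k b / toK k c := by
    intro a b c ha
    rw [(toK k).map_mul, (toK k).map_mul, mul_div_mul_left _ _ ha]
  have hnumK : toK k (aeval (A p) (G ^ E * f)) + toK k (aeval (A q) G) ^ E
        * toK k (aeval (A p) f)
      = toK k (ρ ^ nν) * toK k (ρ ^ (E - nν) * d ^ E * aeval (A p) f) := by
    rw [← (toK k).map_mul, ← hnum, (toK k).map_add, (toK k).map_mul, (toK k).map_pow]
  have hterm : toK k (aeval (A p) (G ^ E * f)) / toK k (∏ i, A p i)
      + toK k (aeval (A q) G) ^ E * (toK k (aeval (A p) f) / toK k (∏ i, A p i))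
      = toK k (ρ ^ (E - nν) * d ^ E * aeval (A p) f) / toK k u := by
    rw [← mul_div_assoc, ← add_div, hnumK, hprod,
      show toK k (ρ ^ nν) * toK k (ρ ^ (E - nν) * d ^ E * aeval (A p) f)
        = toK k (ρ ^ nν * (ρ ^ (E - nν) * d ^ E * aeval (A p) f))
        from ((toK k).map_mul _ _).symm]
    exact hcancel _ _ _ hρn0
  rw [hterm]
  exact Gd_frac hu

end FAMILY

/-- Symmetric polynomials are closed under powers. -/
lemma isSymmetric_pow {n : ℕ} {G : MvPolynomial (Fin n) (ZMod 2)} (hG : G.IsSymmetric)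
    (e : ℕ) : (G ^ e).IsSymmetric := by
  induction e with
  | zero => simpa using MvPolynomial.IsSymmetric.one
  | succ e ih => rw [pow_succ]; exact ih.mul hG

/-- The core descent lemma. -/
lemma core_descent {k n : ℕ} {ρ : Rk k} (hρp : Prime ρ) {ι : Type} [DecidableEq ι]
    (L : ℕ) (gv : ι → MvPolynomial (Fin n) (ZMod 2) → Rk k)
    (hg1 : ∀ i, gv i 1 = 1)
    (hgmul : ∀ i G H, gv i (G * H) = gv i G * gv i H) :
    ∀ (J : Finset ι) (s : ι → Kk k),
    (∀ G : MvPolynomial (Fin n) (ZMod 2), G.IsSymmetric →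
      Gd ρ (∑ i ∈ J, (toK k (gv i G)) ^ (2 ^ L) * s i)) →
    (∀ i ∈ J, ∀ j ∈ J, i ≠ j →
      ∃ G : MvPolynomial (Fin n) (ZMod 2), G.IsSymmetric ∧ ¬ ρ ∣ (gv i G - gv j G)) →
    ∀ i ∈ J, Gd ρ (s i) := by
  classical
  haveI : Fact (Nat.Prime 2) := ⟨Nat.prime_two⟩
  intro J
  induction J using Finset.strongInduction with
  | _ J ih =>
    intro s hrel hsep i hi
    by_cases hJ : ∀ j ∈ J, j = i
    · have hJi : J = {i} := Finset.eq_singleton_iff_unique_mem.mpr ⟨hi, hJ⟩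
      have := hrel 1 MvPolynomial.IsSymmetric.one
      rw [hJi, Finset.sum_singleton, hg1, (toK k).map_one, one_pow, one_mul] at this
      exact this
    · push_neg at hJ
      obtain ⟨j0, hj0J, hj0i⟩ := hJ
      obtain ⟨G0, hG0sym, hG0d⟩ := hsep i hi j0 hj0J (fun h => hj0i (h.symm))
      set E := 2 ^ L with hE
      set s' : ι → Kk k := fun a =>
        ((toK k (gv a G0)) ^ E + (toK k (gv j0 G0)) ^ E) * s a with hs'
      have hs'app : ∀ a, s' a = ((toK k (gv a G0)) ^ E + (toK k (gv j0 G0)) ^ E) * s a :=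
        fun a => rfl
      have hrel' : ∀ G : MvPolynomial (Fin n) (ZMod 2), G.IsSymmetric →
          Gd ρ (∑ a ∈ J.erase j0, (toK k (gv a G)) ^ E * s' a) := by
        intro G hGsym
        have hj0zero : (toK k (gv j0 G)) ^ E * s' j0 = 0 := by
          rw [hs'app, CharTwo.add_self_eq_zero, zero_mul, mul_zero]
        rw [Finset.sum_erase (f := fun a => (toK k (gv a G)) ^ E * s' a) J hj0zero]
        have hsplit : ∀ a, (toK k (gv a G)) ^ E * s' a
            = (toK k (gv a (G * G0))) ^ E * s a
              + (toK k (gv j0 G0)) ^ E * ((toK k (gv a G)) ^ E * s a) := by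
          intro a
          rw [hs'app, hgmul, (toK k).map_mul, mul_pow]
          ring
        rw [Finset.sum_congr rfl (fun a _ => hsplit a), Finset.sum_add_distrib,
          ← Finset.mul_sum]
        exact Gd_add hρp (hrel (G * G0) (hGsym.mul hG0sym))
          (Gd_mul hρp (by rw [← (toK k).map_pow]; exact Gd_toK hρp _) (hrel G hGsym))
      have hsep' : ∀ a ∈ J.erase j0, ∀ b ∈ J.erase j0, a ≠ b →
          ∃ G : MvPolynomial (Fin n) (ZMod 2), G.IsSymmetric ∧ ¬ ρ ∣ (gv a G - gv b G) :=
        fun a ha b hb hab =>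
          hsep a (Finset.mem_of_mem_erase ha) b (Finset.mem_of_mem_erase hb) hab
      have hii : i ∈ J.erase j0 := Finset.mem_erase_of_ne_of_mem (fun h => hj0i h.symm) hi
      have hGd := ih (J.erase j0) (Finset.erase_ssubset hj0J) s' hrel' hsep' i hii
      have hGd2 : Gd ρ (((toK k (gv i G0)) ^ E + (toK k (gv j0 G0)) ^ E) * s i) := by
        rw [← hs'app]; exact hGd
      have hcoef : (toK k (gv i G0)) ^ E + (toK k (gv j0 G0)) ^ E
          = toK k ((gv i G0 - gv j0 G0) ^ E) := by
        rw [(toK k).map_pow, (toK k).map_sub, CharTwo.sub_eq_add, hE, add_pow_char_pow]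
      rw [hcoef] at hGd2
      exact Gd_cancel hρp (not_dvd_pow hρp hG0d E) hGd2

theorem stmt_10 (k n : ℕ) (hk : 1 ≤ k) (hn : 1 ≤ n)
    (ρ : Rk k) (hρ0 : ρ ≠ 0) (hρ1 : ρ.IsHomogeneous 1)
    (m : ℕ) (V : Fin m → Type) [∀ i, Fintype (V i)]
    (nn : Fin m → ℕ) (A : (i : Fin m) → V i → Fin n → Rk k)
    (hcell : ∀ i, Cellular ρ (nn i) (A i))
    (ha : ∀ i, nn i = 1 → Fintype.card (V i) = 2)
    (hb : ∀ i j, i ≠ j → nn i = nn j → 1 < nn i →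
      ∀ (p : V i) (q : V j), ¬ CongMod ρ (A i p) (A j q)) :
    RhoDivisible ρ (fun x : Σ i, V i => A x.1 x.2) ↔
      ∀ i, RhoDivisible ρ (A i) := by
  classical
  have hρp : Prime ρ := prime_of_homog_one hk hρ0 hρ1
  -- reformulation via Gd and Ssum
  have hsigma : ∀ f : MvPolynomial (Fin n) (ZMod 2),
      (∑ x : Σ i, V i, toK k (aeval (A x.1 x.2) f) / toK k (∏ i, A x.1 x.2 i))
      = ∑ i, Ssum (A i) f := by
    intro f
    rw [← Finset.univ_sigma_univ, Finset.sum_sigma]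
    rfl
  constructor
  · -- hard direction
    intro hmain i0 f hf
    suffices hGd : Gd ρ (Ssum (A i0) f) by
      obtain ⟨h, g, hg, heq⟩ := hGd
      exact ⟨h, g, hg, heq⟩
    -- the "master" relation
    have master : ∀ F : MvPolynomial (Fin n) (ZMod 2), F.IsSymmetric →
        Gd ρ (∑ i, Ssum (A i) F) := by
      intro F hF
      obtain ⟨h, g, hg, heq⟩ := hmain F hF
      rw [hsigma F] at heq
      rw [heq]
      exact Gd_frac hg
    -- goodness of small families for arbitrary symmetric tests
    have hsmall : ∀ i, (¬ (2 ≤ nn i ∧ Nonempty (V i))) →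
        ∀ F : MvPolynomial (Fin n) (ZMod 2), F.IsSymmetric → Gd ρ (Ssum (A i) F) := by
      intro i hcon F hF
      by_cases hne : Nonempty (V i)
      · have hsmall2 : nn i ≤ 1 := by
          by_contra hgt
          exact hcon ⟨by omega, hne⟩
        interval_cases hni : nn i
        · exact good_val0 hρ1 hρp (hni ▸ hcell i) rfl F
        · exact good_val1 hρ0 hρ1 hρp (hni ▸ hcell i) (ha i hni) hF
      · rw [not_nonempty_iff] at hne
        have : Ssum (A i) F = 0 := by
          rw [Ssum, Finset.univ_eq_empty, Finset.sum_empty]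
        rw [this]
        exact Gd_zero hρp
    -- decide which case we are in
    by_cases hbig : 2 ≤ nn i0 ∧ Nonempty (V i0)
    · -- the interesting case: core descent
      have hL : n ≤ 2 ^ n := le_of_lt (Nat.lt_two_pow_self (n := n))
      obtain ⟨J, hJ⟩ : ∃ J : Finset (Fin m),
          J = Finset.univ.filter (fun i => 2 ≤ nn i ∧ Nonempty (V i)) := ⟨_, rfl⟩
      have hi0J : i0 ∈ J := by
        rw [hJ, Finset.mem_filter]
        exact ⟨Finset.mem_univ _, hbig⟩
      -- base points
      obtain ⟨pb, hpb⟩ : ∃ pb : (i : Fin m) → Nonempty (V i) → V i, True :=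
        ⟨fun i h => Classical.choice h, trivial⟩
      obtain ⟨gv, hgv⟩ : ∃ gv : Fin m → MvPolynomial (Fin n) (ZMod 2) → Rk k,
          gv = fun i G => if h : Nonempty (V i) then aeval (A i (pb i h)) G else 1 :=
        ⟨_, rfl⟩
      have hg1 : ∀ i, gv i 1 = 1 := by
        intro i
        rw [hgv]
        by_cases h : Nonempty (V i) <;> simp [h]
      have hgmul : ∀ i G H, gv i (G * H) = gv i G * gv i H := by
        intro i G H
        rw [hgv]
        by_cases h : Nonempty (V i) <;> simp [h]
      -- relation
      have hrel : ∀ G : MvPolynomial (Fin n) (ZMod 2), G.IsSymmetric →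
          Gd ρ (∑ i ∈ J, (toK k (gv i G)) ^ (2 ^ n) * Ssum (A i) f) := by
        intro G hG
        have hGEf : (G ^ (2 ^ n) * f).IsSymmetric := (isSymmetric_pow hG (2 ^ n)).mul hf
        have h1 : Gd ρ (∑ i, Ssum (A i) (G ^ (2 ^ n) * f)) := master _ hGEf
        -- split off the small families
        have hsplitJ : (∑ i, Ssum (A i) (G ^ (2 ^ n) * f))
            = (∑ i ∈ J, Ssum (A i) (G ^ (2 ^ n) * f))
              + ∑ i ∈ Finset.univ.filter (fun i => ¬ (2 ≤ nn i ∧ Nonempty (V i))),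
                  Ssum (A i) (G ^ (2 ^ n) * f) := by
          rw [hJ]
          exact (Finset.sum_filter_add_sum_filter_not Finset.univ _ _).symm
        have h2 : Gd ρ (∑ i ∈ Finset.univ.filter
            (fun i => ¬ (2 ≤ nn i ∧ Nonempty (V i))), Ssum (A i) (G ^ (2 ^ n) * f)) := by
          apply Gd_sum hρp
          intro i hiF
          rw [Finset.mem_filter] at hiF
          exact hsmall i hiF.2 _ hGEf
        have h3 : Gd ρ (∑ i ∈ J, Ssum (A i) (G ^ (2 ^ n) * f)) := by
          have hchar : ∀ z : Kk k, z + z = 0 := CharTwo.add_self_eq_zero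
          have : (∑ i ∈ J, Ssum (A i) (G ^ (2 ^ n) * f))
              = (∑ i, Ssum (A i) (G ^ (2 ^ n) * f))
                + ∑ i ∈ Finset.univ.filter (fun i => ¬ (2 ≤ nn i ∧ Nonempty (V i))),
                    Ssum (A i) (G ^ (2 ^ n) * f) := by
            rw [hsplitJ]
            rw [add_assoc, hchar, add_zero]
          rw [this]
          exact Gd_add hρp h1 h2
        -- twist each family in J
        have h4 : Gd ρ (∑ i ∈ J, (Ssum (A i) (G ^ (2 ^ n) * f)
            + toK k (gv i G) ^ (2 ^ n) * Ssum (A i) f)) := by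
          apply Gd_sum hρp
          intro i hiJ
          rw [hJ, Finset.mem_filter] at hiJ
          have hne : Nonempty (V i) := hiJ.2.2
          have : gv i G = aeval (A i (pb i hne)) G := by
            rw [hgv]; simp [hne]
          rw [this]
          exact family_twist hρ1 hρp (hcell i) (pb i hne) f G hG n hL
        -- combine using characteristic two
        have hchar : ∀ z : Kk k, z + z = 0 := CharTwo.add_self_eq_zero
        have hcomb : (∑ i ∈ J, (toK k (gv i G)) ^ (2 ^ n) * Ssum (A i) f)
            = (∑ i ∈ J, Ssum (A i) (G ^ (2 ^ n) * f))
              + ∑ i ∈ J, (Ssum (A i) (G ^ (2 ^ n) * f) + toK k (gv i G) ^ (2 ^ n) * Ssum (A i) f) := by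
          rw [← Finset.sum_add_distrib]
          apply Finset.sum_congr rfl
          intro i _
          rw [← add_assoc, hchar, zero_add]
        rw [hcomb]
        exact Gd_add hρp h3 h4
      -- separation
      have hsep : ∀ i ∈ J, ∀ j ∈ J, i ≠ j →
          ∃ G : MvPolynomial (Fin n) (ZMod 2), G.IsSymmetric ∧ ¬ ρ ∣ (gv i G - gv j G) := by
        intro i hiJ j hjJ hij
        rw [hJ, Finset.mem_filter] at hiJ hjJ
        have hnei : Nonempty (V i) := hiJ.2.2
        have hnej : Nonempty (V j) := hjJ.2.2
        set p := pb i hnei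
        set q := pb j hnej
        have hnc : ¬ CongMod ρ (A i p) (A j q) := by
          by_cases heq : nn i = nn j
          · exact hb i j hij heq (by omega) p q
          · intro hcong
            apply heq
            rw [← hcell i |>.2.2.1 p, ← hcell j |>.2.2.1 q]
            exact cnt_congMod hρ1 ((hcell i).2.1 p) ((hcell j).2.1 q) hcong
        have hesym : ¬ ∀ r, ρ ∣ (∑ t ∈ Finset.powersetCard r Finset.univ, ∏ l ∈ t, A i p l)
            - (∑ t ∈ Finset.powersetCard r Finset.univ, ∏ l ∈ t, A j q l) := by
          intro h
          exact hnc (congMod_of_esymm hρ0 hρp h)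
        push_neg at hesym
        obtain ⟨r, hr⟩ := hesym
        refine ⟨esymm (Fin n) (ZMod 2) r, esymm_isSymmetric _ _ r, ?_⟩
        have haev : ∀ (a : Fin n → Rk k), aeval a (esymm (Fin n) (ZMod 2) r)
            = ∑ t ∈ Finset.powersetCard r Finset.univ, ∏ l ∈ t, a l := by
          intro a
          rw [aeval_esymm_eq_multiset_esymm, Finset.esymm_map_val]
        have hgvi : gv i (esymm (Fin n) (ZMod 2) r)
            = ∑ t ∈ Finset.powersetCard r Finset.univ, ∏ l ∈ t, A i p l := by
          rw [hgv]; simp only [hnei, dif_pos]; exact haev _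
        have hgvj : gv j (esymm (Fin n) (ZMod 2) r)
            = ∑ t ∈ Finset.powersetCard r Finset.univ, ∏ l ∈ t, A j q l := by
          rw [hgv]; simp only [hnej, dif_pos]; exact haev _
        rw [hgvi, hgvj]
        exact hr
      exact core_descent hρp n gv hg1 hgmul J (fun i => Ssum (A i) f) hrel hsep i0 hi0J
    · exact hsmall i0 hbig f hf
  · -- easy direction
    intro hall f hf
    have : Gd ρ (∑ i, Ssum (A i) f) := by
      apply Gd_sum hρp
      intro i _
      obtain ⟨h, g, hg, heq⟩ := hall i f hf
      rw [Ssum, heq]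
      exact Gd_frac hg
    obtain ⟨h, g, hg, heq⟩ := this
    exact ⟨h, g, hg, by rw [hsigma f]; exact heq⟩

end
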